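/- Let 𝒳 be a nonempty finite set, P a pmf on 𝒳 with P(x) > 0 for all x, and L_th > 0 a real number satisfying H(P) + log₂(1 + 1/√2) < L_th, where H(P) is the Shannon entropy in bits. Let Λ = {ℓ : 𝒳 → ℝ≥0 : Σ_x 2^{−ℓ(x)} ≤ 1}, and for z ≥ 0 and a pmf Q on 𝒳 set g_{z,Q,P}(x) = (1 + z²/2)·P(x) + z·√(Q(x)·P(x)). Then the infimum over ℓ ∈ Λ with E[ℓ(X)] < L_th of E[ℓ(X)] + E[ℓ(X)²]/(2·(L_th − E[ℓ(X)])) (with X ∼ P) equals the supremum over z ≥ 0 and pmfs Q on 𝒳 of Σ_x g_{z,Q,P}(x) · log₂( (Σ_{x'} g_{z,Q,P}(x')) / g_{z,Q,P}(x) ) − (z²/2)·L_th. -/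

import Mathlib

open Real Finset

lemma gibbs {𝒳 : Type*} [Fintype 𝒳] [Nonempty 𝒳] (g ℓ : 𝒳 → ℝ)
    (hg : ∀ x, 0 < g x)
    (hkraft : ∑ x, (2 : ℝ) ^ (-ℓ x) ≤ 1) :
    ∑ x, g x * Real.logb 2 ((∑ x', g x') / g x) ≤ ∑ x, g x * ℓ x := by
  set S := ∑ x', g x' with hS
  have hSpos : 0 < S := Finset.sum_pos (fun x _ => hg x) Finset.univ_nonempty
  have hlog2 : (0:ℝ) < Real.log 2 := Real.log_pos (by norm_num)
  have key : ∀ x, (g x - S * (2:ℝ) ^ (-ℓ x)) / Real.log 2 ≤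
      g x * ℓ x - g x * Real.logb 2 (S / g x) := by
    intro x
    have hgx := hg x
    have hrp : (0:ℝ) < (2:ℝ) ^ (-ℓ x) := Real.rpow_pos_of_pos (by norm_num) _
    have hu : (0:ℝ) < S * (2:ℝ) ^ (-ℓ x) / g x := by positivity
    have hlog : Real.log (S * (2:ℝ) ^ (-ℓ x) / g x) ≤ S * (2:ℝ) ^ (-ℓ x) / g x - 1 :=
      Real.log_le_sub_one_of_pos hu
    have hexpand : Real.log (S * (2:ℝ) ^ (-ℓ x) / g x)
        = Real.log S + (-ℓ x) * Real.log 2 - Real.log (g x) := by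
      rw [Real.log_div (by positivity) (ne_of_gt hgx), Real.log_mul (ne_of_gt hSpos) (ne_of_gt hrp),
        Real.log_rpow (by norm_num)]
    have hlogb : Real.logb 2 (S / g x) = (Real.log S - Real.log (g x)) / Real.log 2 := by
      rw [Real.logb, Real.log_div (ne_of_gt hSpos) (ne_of_gt hgx)]
    rw [hexpand] at hlog
    have h2 : g x * (Real.log S + (-ℓ x) * Real.log 2 - Real.log (g x)) ≤
        g x * (S * (2:ℝ) ^ (-ℓ x) / g x - 1) := by
      exact mul_le_mul_of_nonneg_left hlog hgx.le
    have h3 : g x * (S * (2:ℝ) ^ (-ℓ x) / g x - 1) = S * (2:ℝ) ^ (-ℓ x) - g x := by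
      field_simp
    rw [h3] at h2
    have h4 : g x * Real.logb 2 (S / g x) * Real.log 2 = g x * (Real.log S - Real.log (g x)) := by
      rw [hlogb]; field_simp
    rw [div_le_iff₀ hlog2]
    nlinarith [h2, h4]
  calc ∑ x, g x * Real.logb 2 (S / g x)
      ≤ ∑ x, (g x * ℓ x - (g x - S * (2:ℝ) ^ (-ℓ x)) / Real.log 2) := by
        apply Finset.sum_le_sum; intro x _; linarith [key x]
    _ = ∑ x, g x * ℓ x - (S - S * ∑ x, (2:ℝ) ^ (-ℓ x)) / Real.log 2 := by
        rw [Finset.sum_sub_distrib, ← Finset.sum_div, Finset.sum_sub_distrib, ← Finset.mul_sum]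
    _ ≤ ∑ x, g x * ℓ x := by
        have : 0 ≤ (S - S * ∑ x, (2:ℝ) ^ (-ℓ x)) / Real.log 2 := by
          apply div_nonneg _ hlog2.le
          nlinarith
        linarith

lemma cs_sqrt {𝒳 : Type*} [Fintype 𝒳] (P Q ℓ : 𝒳 → ℝ)
    (hP : ∀ x, 0 ≤ P x) (hQ : ∀ x, 0 ≤ Q x) (hl : ∀ x, 0 ≤ ℓ x)
    (hQ1 : ∑ x, Q x = 1) :
    ∑ x, Real.sqrt (Q x * P x) * ℓ x ≤ Real.sqrt (∑ x, P x * ℓ x ^ 2) := by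
  have hnn : 0 ≤ ∑ x, Real.sqrt (Q x * P x) * ℓ x :=
    Finset.sum_nonneg fun x _ => mul_nonneg (Real.sqrt_nonneg _) (hl x)
  rw [Real.le_sqrt hnn (Finset.sum_nonneg fun x _ => mul_nonneg (hP x) (sq_nonneg _))]
  calc (∑ x, Real.sqrt (Q x * P x) * ℓ x) ^ 2
      = (∑ x, Real.sqrt (Q x) * (Real.sqrt (P x) * ℓ x)) ^ 2 := by
        congr 1; apply Finset.sum_congr rfl; intro x _
        rw [Real.sqrt_mul (hQ x)]; ring
    _ ≤ (∑ x, Real.sqrt (Q x) ^ 2) * ∑ x, (Real.sqrt (P x) * ℓ x) ^ 2 :=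
        Finset.sum_mul_sq_le_sq_mul_sq _ _ _
    _ = ∑ x, P x * ℓ x ^ 2 := by
        have e1 : ∑ x, Real.sqrt (Q x) ^ 2 = 1 := by
          rw [← hQ1]; apply Finset.sum_congr rfl; intro x _; exact Real.sq_sqrt (hQ x)
        rw [e1, one_mul]; apply Finset.sum_congr rfl; intro x _
        rw [mul_pow, Real.sq_sqrt (hP x)]

lemma jensen_sq {𝒳 : Type*} [Fintype 𝒳] (P ℓ : 𝒳 → ℝ)
    (hP : ∀ x, 0 ≤ P x) (hP1 : ∑ x, P x = 1) :
    (∑ x, P x * ℓ x) ^ 2 ≤ ∑ x, P x * ℓ x ^ 2 := by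
  calc (∑ x, P x * ℓ x) ^ 2
      = (∑ x, Real.sqrt (P x) * (Real.sqrt (P x) * ℓ x)) ^ 2 := by
        congr 1; apply Finset.sum_congr rfl; intro x _
        rw [← mul_assoc, Real.mul_self_sqrt (hP x)]
    _ ≤ (∑ x, Real.sqrt (P x) ^ 2) * ∑ x, (Real.sqrt (P x) * ℓ x) ^ 2 :=
        Finset.sum_mul_sq_le_sq_mul_sq _ _ _
    _ = ∑ x, P x * ℓ x ^ 2 := by
        have e1 : ∑ x, Real.sqrt (P x) ^ 2 = 1 := by
          rw [← hP1]; apply Finset.sum_congr rfl; intro x _; exact Real.sq_sqrt (hP x)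
        rw [e1, one_mul]; apply Finset.sum_congr rfl; intro x _
        rw [mul_pow, Real.sq_sqrt (hP x)]

lemma kraft_convex_pt (a b t : ℝ) (ht0 : 0 ≤ t) (ht1 : t ≤ 1) :
    (2:ℝ) ^ (-((1 - t) * a + t * b)) ≤ (1 - t) * (2:ℝ) ^ (-a) + t * (2:ℝ) ^ (-b) := by
  have h2 : (0:ℝ) < 2 := by norm_num
  rw [Real.rpow_def_of_pos h2, Real.rpow_def_of_pos h2, Real.rpow_def_of_pos h2]
  have := convexOn_exp.2 (Set.mem_univ (Real.log 2 * (-a))) (Set.mem_univ (Real.log 2 * (-b)))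
    (by linarith : (0:ℝ) ≤ 1 - t) ht0 (by ring)
  simp only [smul_eq_mul] at this
  calc Real.exp (Real.log 2 * -((1 - t) * a + t * b))
      = Real.exp ((1 - t) * (Real.log 2 * (-a)) + t * (Real.log 2 * (-b))) := by ring_nf
    _ ≤ (1 - t) * Real.exp (Real.log 2 * (-a)) + t * Real.exp (Real.log 2 * (-b)) := this

lemma weak_dual {𝒳 : Type*} [Fintype 𝒳] [Nonempty 𝒳] (P : 𝒳 → ℝ)
    (hP : ∀ x, 0 < P x) (hPsum : ∑ x, P x = 1) (Lth : ℝ)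
    (z : ℝ) (Q ℓ : 𝒳 → ℝ) (hz : 0 ≤ z) (hQ : ∀ x, 0 ≤ Q x) (hQ1 : ∑ x, Q x = 1)
    (hl : ∀ x, 0 ≤ ℓ x) (hkraft : ∑ x, (2 : ℝ) ^ (-ℓ x) ≤ 1)
    (hm : ∑ x, P x * ℓ x < Lth) :
    (∑ x, ((1 + z ^ 2 / 2) * P x + z * Real.sqrt (Q x * P x)) *
        Real.logb 2 ((∑ x', ((1 + z ^ 2 / 2) * P x' + z * Real.sqrt (Q x' * P x'))) /
          ((1 + z ^ 2 / 2) * P x + z * Real.sqrt (Q x * P x)))) - z ^ 2 / 2 * Lth ≤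
    (∑ x, P x * ℓ x) + (∑ x, P x * ℓ x ^ 2) / (2 * (Lth - ∑ x, P x * ℓ x)) := by
  set g : 𝒳 → ℝ := fun x => (1 + z ^ 2 / 2) * P x + z * Real.sqrt (Q x * P x) with hgdef
  have hgpos : ∀ x, 0 < g x := by
    intro x
    have h1 : 0 < (1 + z ^ 2 / 2) * P x := by nlinarith [hP x, sq_nonneg z]
    have h2 : 0 ≤ z * Real.sqrt (Q x * P x) := mul_nonneg hz (Real.sqrt_nonneg _)
    simp only [hgdef]; linarith
  set m := ∑ x, P x * ℓ x with hmdef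
  set s := ∑ x, P x * ℓ x ^ 2 with hsdef
  have hs0 : 0 ≤ s := Finset.sum_nonneg fun x _ => mul_nonneg (hP x).le (sq_nonneg _)
  have hd : 0 < Lth - m := by linarith
  have step1 : ∑ x, g x * Real.logb 2 ((∑ x', g x') / g x) ≤ ∑ x, g x * ℓ x :=
    gibbs g ℓ hgpos hkraft
  have step2 : ∑ x, g x * ℓ x = (1 + z ^ 2 / 2) * m + z * ∑ x, Real.sqrt (Q x * P x) * ℓ x := by
    rw [hmdef, Finset.mul_sum, Finset.mul_sum, ← Finset.sum_add_distrib]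
    apply Finset.sum_congr rfl; intro x _; simp only [hgdef]; ring
  have step3 : ∑ x, Real.sqrt (Q x * P x) * ℓ x ≤ Real.sqrt s :=
    cs_sqrt P Q ℓ (fun x => (hP x).le) hQ hl hQ1
  have step4 : z * Real.sqrt s ≤ z ^ 2 * (Lth - m) / 2 + s / (2 * (Lth - m)) := by
    have h1 : 0 ≤ (z * (Lth - m) - Real.sqrt s) ^ 2 := sq_nonneg _
    have h2 : Real.sqrt s ^ 2 = s := Real.sq_sqrt hs0
    have key : 2 * (Lth - m) * (z * Real.sqrt s) ≤
        2 * (Lth - m) * (z ^ 2 * (Lth - m) / 2 + s / (2 * (Lth - m))) := by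
      have e : 2 * (Lth - m) * (z ^ 2 * (Lth - m) / 2 + s / (2 * (Lth - m)))
          = z ^ 2 * (Lth - m) ^ 2 + s := by field_simp
      rw [e]; nlinarith
    exact le_of_mul_le_mul_left key (by linarith)
  have hzT : z * ∑ x, Real.sqrt (Q x * P x) * ℓ x ≤ z * Real.sqrt s :=
    mul_le_mul_of_nonneg_left step3 hz
  calc (∑ x, g x * Real.logb 2 ((∑ x', g x') / g x)) - z ^ 2 / 2 * Lth
      ≤ (1 + z ^ 2 / 2) * m + z * Real.sqrt s - z ^ 2 / 2 * Lth := by linarith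
    _ = m + (z * Real.sqrt s - z ^ 2 * (Lth - m) / 2) := by ring
    _ ≤ m + s / (2 * (Lth - m)) := by linarith

set_option maxHeartbeats 2000000 in
lemma exists_min {𝒳 : Type*} [Fintype 𝒳] [Nonempty 𝒳] (P : 𝒳 → ℝ)
    (hP : ∀ x, 0 < P x) (hPsum : ∑ x, P x = 1) (Lth : ℝ) (hLth : 0 < Lth)
    (hHL : (∑ x, P x * Real.logb 2 (1 / P x)) < Lth) :
    ∃ (δ : ℝ) (M l : 𝒳 → ℝ), 0 < δ ∧ (∀ x, 0 ≤ l x) ∧ (∑ x, (2:ℝ) ^ (-l x) ≤ 1) ∧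
      (∀ x, l x ≤ M x - 1) ∧ (∑ x, P x * l x ≤ Lth - 2 * δ) ∧
      (∀ ℓ : 𝒳 → ℝ, (∀ x, 0 ≤ ℓ x) → (∑ x, (2:ℝ) ^ (-ℓ x) ≤ 1) → (∀ x, ℓ x ≤ M x) →
        (∑ x, P x * ℓ x ≤ Lth - δ) →
        (∑ x, P x * l x) + (∑ x, P x * l x ^ 2) / (2 * (Lth - ∑ x, P x * l x)) ≤
        (∑ x, P x * ℓ x) + (∑ x, P x * ℓ x ^ 2) / (2 * (Lth - ∑ x, P x * ℓ x))) ∧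
      (∀ ℓ : 𝒳 → ℝ, (∀ x, 0 ≤ ℓ x) → (∑ x, (2:ℝ) ^ (-ℓ x) ≤ 1) →
        (∑ x, P x * ℓ x < Lth) →
        (∑ x, P x * l x) + (∑ x, P x * l x ^ 2) / (2 * (Lth - ∑ x, P x * l x)) ≤
        (∑ x, P x * ℓ x) + (∑ x, P x * ℓ x ^ 2) / (2 * (Lth - ∑ x, P x * ℓ x))) := by
  classical
  set m : (𝒳 → ℝ) → ℝ := fun ℓ => ∑ x, P x * ℓ x with hmdef
  set s : (𝒳 → ℝ) → ℝ := fun ℓ => ∑ x, P x * ℓ x ^ 2 with hsdef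
  set F : (𝒳 → ℝ) → ℝ := fun ℓ => m ℓ + s ℓ / (2 * (Lth - m ℓ)) with hFdef
  set ℓ₀ : 𝒳 → ℝ := fun x => Real.logb 2 (1 / P x) with hl₀def
  have hPle1 : ∀ x, P x ≤ 1 := by
    intro x
    calc P x ≤ ∑ y, P y := Finset.single_le_sum (fun y _ => (hP y).le) (Finset.mem_univ x)
      _ = 1 := hPsum
  have hl₀nn : ∀ x, 0 ≤ ℓ₀ x := by
    intro x
    apply Real.logb_nonneg (by norm_num)
    rw [le_div_iff₀ (hP x), one_mul]; exact hPle1 x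
  have hkraft₀ : ∑ x, (2:ℝ) ^ (-ℓ₀ x) = 1 := by
    rw [← hPsum]
    apply Finset.sum_congr rfl; intro x _
    have : -ℓ₀ x = Real.logb 2 (P x) := by
      simp only [hl₀def, one_div, Real.logb_inv, neg_neg]
    rw [this, Real.rpow_logb (by norm_num) (by norm_num) (hP x)]
  have hmℓ₀ : m ℓ₀ = ∑ x, P x * Real.logb 2 (1 / P x) := rfl
  have hH : m ℓ₀ < Lth := by rw [hmℓ₀]; exact hHL
  have hH0 : 0 ≤ m ℓ₀ := Finset.sum_nonneg fun x _ => mul_nonneg (hP x).le (hl₀nn x)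
  have hs₀0 : 0 ≤ s ℓ₀ := Finset.sum_nonneg fun x _ => mul_nonneg (hP x).le (sq_nonneg _)
  set C : ℝ := F ℓ₀ with hCdef
  have hCH : m ℓ₀ ≤ C := by
    have : 0 ≤ s ℓ₀ / (2 * (Lth - m ℓ₀)) := by
      apply div_nonneg hs₀0; nlinarith
    simp only [hCdef, hFdef]; linarith
  have hC0 : 0 ≤ C := le_trans hH0 hCH
  set δ : ℝ := min ((Lth - m ℓ₀) / 2) (min (Lth / 4) (Lth ^ 2 / (16 * (C + 1)))) with hδdef
  have hδpos : 0 < δ := by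
    apply lt_min (by linarith)
    apply lt_min (by linarith)
    positivity
  have hδ1 : δ ≤ (Lth - m ℓ₀) / 2 := min_le_left _ _
  have hδ2 : δ ≤ Lth / 4 := le_trans (min_le_right _ _) (min_le_left _ _)
  have hδ3 : δ ≤ Lth ^ 2 / (16 * (C + 1)) := le_trans (min_le_right _ _) (min_le_right _ _)
  set M : 𝒳 → ℝ := fun x => ℓ₀ x + (Real.sqrt (2 * (C + 1) * Lth / P x) + 1) with hMdef
  -- key bound lemma
  have bound_of_le_C : ∀ ℓ : 𝒳 → ℝ, (∀ x, 0 ≤ ℓ x) → (m ℓ < Lth) → F ℓ ≤ C →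
      (m ℓ ≤ Lth - 2 * δ ∧ ∀ x, ℓ x ≤ M x - 1) := by
    intro ℓ hln hmL hFC
    have hm0 : 0 ≤ m ℓ := Finset.sum_nonneg fun x _ => mul_nonneg (hP x).le (hln x)
    have hs0 : 0 ≤ s ℓ := Finset.sum_nonneg fun x _ => mul_nonneg (hP x).le (sq_nonneg _)
    have hd : 0 < Lth - m ℓ := by linarith
    have hsC : s ℓ ≤ 2 * (Lth - m ℓ) * (C - m ℓ) := by
      have : s ℓ / (2 * (Lth - m ℓ)) ≤ C - m ℓ := by
        have := hFC; simp only [hFdef] at this; linarith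
      calc s ℓ = s ℓ / (2 * (Lth - m ℓ)) * (2 * (Lth - m ℓ)) := by field_simp
        _ ≤ (C - m ℓ) * (2 * (Lth - m ℓ)) := by
            apply mul_le_mul_of_nonneg_right this; linarith
        _ = 2 * (Lth - m ℓ) * (C - m ℓ) := by ring
    have hsbound : s ℓ ≤ 2 * (C + 1) * Lth := by nlinarith
    constructor
    · by_contra hcon
      push_neg at hcon
      have hmgt : Lth - 2 * δ < m ℓ := hcon
      have hjen : (m ℓ) ^ 2 ≤ s ℓ := jensen_sq P ℓ (fun x => (hP x).le) hPsum
      have h1 : m ℓ > Lth / 2 := by linarith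
      have h2 : Lth - m ℓ < 2 * δ := by linarith
      have h3 : (m ℓ) ^ 2 ≤ 2 * (2 * δ) * C := by nlinarith
      have h4 : δ * (16 * (C + 1)) ≤ Lth ^ 2 := (le_div_iff₀ (by positivity)).1 hδ3
      nlinarith
    · intro x
      have hx2 : P x * ℓ x ^ 2 ≤ s ℓ := by
        simp only [hsdef]
        exact Finset.single_le_sum (f := fun y => P y * ℓ y ^ 2)
          (fun y _ => mul_nonneg (hP y).le (sq_nonneg _)) (Finset.mem_univ x)
      have hx3 : ℓ x ^ 2 ≤ 2 * (C + 1) * Lth / P x := by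
        rw [le_div_iff₀ (hP x)]; nlinarith
      have hx4 : ℓ x ≤ Real.sqrt (2 * (C + 1) * Lth / P x) := by
        calc ℓ x = Real.sqrt (ℓ x ^ 2) := (Real.sqrt_sq (hln x)).symm
          _ ≤ _ := Real.sqrt_le_sqrt hx3
      have : 0 ≤ ℓ₀ x := hl₀nn x
      simp only [hMdef]; linarith
  -- the compact set K
  set K : Set (𝒳 → ℝ) := (Set.pi Set.univ (fun x => Set.Icc 0 (M x))) ∩
      ({ℓ | ∑ x, (2:ℝ) ^ (-ℓ x) ≤ 1} ∩ {ℓ | m ℓ ≤ Lth - δ}) with hKdef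
  have hrpow_cont : ∀ x : 𝒳, Continuous (fun ℓ : 𝒳 → ℝ => (2:ℝ) ^ (-ℓ x)) := by
    intro x
    have : (fun ℓ : 𝒳 → ℝ => (2:ℝ) ^ (-ℓ x)) =
        fun ℓ : 𝒳 → ℝ => Real.exp (Real.log 2 * (-ℓ x)) := by
      funext ℓ; rw [Real.rpow_def_of_pos (by norm_num)]
    rw [this]
    exact Real.continuous_exp.comp (continuous_const.mul ((continuous_apply x).neg))
  have hm_cont : Continuous m := by
    apply continuous_finset_sum; intro x _
    exact continuous_const.mul (continuous_apply x)
  have hs_cont : Continuous s := by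
    apply continuous_finset_sum; intro x _
    exact continuous_const.mul ((continuous_apply x).pow 2)
  have hKclosed : IsClosed K := by
    apply IsClosed.inter
    · exact isClosed_set_pi (fun a _ => isClosed_Icc)
    apply IsClosed.inter
    · exact isClosed_le (continuous_finset_sum _ (fun x _ => hrpow_cont x)) continuous_const
    · exact isClosed_le hm_cont continuous_const
  have hKcompact : IsCompact K :=
    IsCompact.of_isClosed_subset (isCompact_univ_pi (fun x => isCompact_Icc)) hKclosed
      (fun ℓ hℓ => hℓ.1)
  have hFcont : ContinuousOn F K := by
    apply ContinuousOn.add hm_cont.continuousOn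
    apply ContinuousOn.div hs_cont.continuousOn
      ((continuous_const.mul (continuous_const.sub hm_cont)).continuousOn)
    intro ℓ hℓ
    have : m ℓ ≤ Lth - δ := hℓ.2.2
    have : 0 < 2 * (Lth - m ℓ) := by nlinarith
    exact ne_of_gt this
  have hℓ₀K : ℓ₀ ∈ K := by
    refine ⟨fun x _ => ⟨hl₀nn x, ?_⟩, le_of_eq hkraft₀, show m ℓ₀ ≤ Lth - δ by linarith⟩
    have : 0 ≤ Real.sqrt (2 * (C + 1) * Lth / P x) := Real.sqrt_nonneg _
    simp only [hMdef]; linarith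
  obtain ⟨l, hlK, hlmin⟩ := hKcompact.exists_isMinOn ⟨ℓ₀, hℓ₀K⟩ hFcont
  have hlFC : F l ≤ C := hlmin hℓ₀K
  have hlfeas : ∀ x, 0 ≤ l x := fun x => (hlK.1 x (Set.mem_univ x)).1
  have hlkraft : ∑ x, (2:ℝ) ^ (-l x) ≤ 1 := hlK.2.1
  have hlmδ : m l ≤ Lth - δ := hlK.2.2
  have hlm : m l < Lth := by linarith
  obtain ⟨hl2δ, hlM1⟩ := bound_of_le_C l hlfeas hlm hlFC
  refine ⟨δ, M, l, hδpos, hlfeas, hlkraft, hlM1, hl2δ, ?_, ?_⟩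
  · intro ℓ hn hk hM hmδ
    have hmem : ℓ ∈ K := by
      refine ⟨fun x _ => ⟨hn x, hM x⟩, hk, ?_⟩
      show m ℓ ≤ Lth - δ
      exact hmδ
    exact hlmin hmem
  · intro ℓ hn hk hmL
    have hmL' : m ℓ < Lth := hmL
    by_cases hFC : F ℓ ≤ C
    · obtain ⟨h2δ, hM1⟩ := bound_of_le_C ℓ hn hmL' hFC
      have hmem : ℓ ∈ K := by
        refine ⟨fun x _ => ⟨hn x, by linarith [hM1 x]⟩, hk, ?_⟩
        show m ℓ ≤ Lth - δ
        linarith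
      exact hlmin hmem
    · push_neg at hFC
      have h1 : F l ≤ F ℓ := by linarith
      exact h1

lemma slope_nonneg (φ : ℝ → ℝ) (D t₀ : ℝ) (ht₀ : 0 < t₀)
    (hD : HasDerivAt φ D 0) (hmin : ∀ t ∈ Set.Ioc 0 t₀, φ 0 ≤ φ t) : 0 ≤ D := by
  have h1 : Filter.Tendsto (slope φ 0) (nhdsWithin 0 {(0:ℝ)}ᶜ) (nhds D) :=
    hasDerivAt_iff_tendsto_slope.1 hD
  have h2 : Filter.Tendsto (slope φ 0) (nhdsWithin 0 (Set.Ioi 0)) (nhds D) :=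
    h1.mono_left (nhdsWithin_mono 0 (fun t ht => ne_of_gt ht))
  have h3 : ∀ᶠ t in nhdsWithin (0:ℝ) (Set.Ioi 0), 0 ≤ slope φ 0 t := by
    filter_upwards [Ioc_mem_nhdsGT_of_mem ⟨le_refl 0, ht₀⟩] with t ht
    have := hmin t ht
    rw [slope_def_field]
    apply div_nonneg (by linarith) (by simpa using ht.1.le)
  exact ge_of_tendsto h2 h3

lemma phi_hasDeriv (a s b cc mΔ Lth : ℝ) (hd : 0 < Lth - a) :
    HasDerivAt (fun t => (a + t * mΔ) +
        (s + 2 * b * t + cc * t ^ 2) / (2 * (Lth - (a + t * mΔ))))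
      (mΔ + (2 * b * (2 * (Lth - a)) + s * (2 * mΔ)) / (2 * (Lth - a)) ^ 2) 0 := by
  have hlin : HasDerivAt (fun t : ℝ => a + t * mΔ) mΔ 0 := by
    simpa using (hasDerivAt_id (0:ℝ)).mul_const mΔ |>.const_add a
  have hu : HasDerivAt (fun t : ℝ => s + 2 * b * t + cc * t ^ 2) (2 * b) 0 := by
    have h1 : HasDerivAt (fun t : ℝ => 2 * b * t) (2 * b) 0 := by
      simpa using (hasDerivAt_id (0:ℝ)).const_mul (2 * b)
    have h2 : HasDerivAt (fun t : ℝ => cc * t ^ 2) 0 0 := by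
      simpa using (hasDerivAt_pow 2 (0:ℝ)).const_mul cc
    have h3 := (h1.const_add s).add h2
    rw [add_zero] at h3
    exact h3
  have hv : HasDerivAt (fun t : ℝ => 2 * (Lth - (a + t * mΔ))) (2 * (0 - mΔ)) 0 := by
    exact ((hasDerivAt_const (0:ℝ) Lth).sub hlin).const_mul 2
  have hv0 : 2 * (Lth - (a + (0:ℝ) * mΔ)) ≠ 0 := by
    simp only [zero_mul, add_zero]; positivity
  have hq := hu.div hv hv0
  have := hlin.add hq
  refine this.congr_deriv ?_
  simp only [zero_mul, add_zero, mul_zero, mul_one, pow_two]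
  ring

set_option maxHeartbeats 2000000 in
lemma first_order {𝒳 : Type*} [Fintype 𝒳] [Nonempty 𝒳] (P : 𝒳 → ℝ)
    (hP : ∀ x, 0 < P x) (Lth δ : ℝ) (M l : 𝒳 → ℝ) (hδpos : 0 < δ)
    (hLth : 0 < Lth)
    (hlnn : ∀ x, 0 ≤ l x) (hlkraft : ∑ x, (2:ℝ) ^ (-l x) ≤ 1)
    (hlM1 : ∀ x, l x ≤ M x - 1) (hl2δ : ∑ x, P x * l x ≤ Lth - 2 * δ)
    (minK : ∀ ℓ : 𝒳 → ℝ, (∀ x, 0 ≤ ℓ x) → (∑ x, (2:ℝ) ^ (-ℓ x) ≤ 1) → (∀ x, ℓ x ≤ M x) →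
        (∑ x, P x * ℓ x ≤ Lth - δ) →
        (∑ x, P x * l x) + (∑ x, P x * l x ^ 2) / (2 * (Lth - ∑ x, P x * l x)) ≤
        (∑ x, P x * ℓ x) + (∑ x, P x * ℓ x ^ 2) / (2 * (Lth - ∑ x, P x * ℓ x)))
    (ℓ : 𝒳 → ℝ) (hn : ∀ x, 0 ≤ ℓ x) (hk : ∑ x, (2:ℝ) ^ (-ℓ x) ≤ 1) :
    ∑ x, ((1 + (∑ y, P y * l y ^ 2) / (2 * (Lth - ∑ y, P y * l y) ^ 2)) * P x
        + P x * l x / (Lth - ∑ y, P y * l y)) * l x ≤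
    ∑ x, ((1 + (∑ y, P y * l y ^ 2) / (2 * (Lth - ∑ y, P y * l y) ^ 2)) * P x
        + P x * l x / (Lth - ∑ y, P y * l y)) * ℓ x := by
  classical
  set ml := ∑ y, P y * l y with hmldef
  set sl := ∑ y, P y * l y ^ 2 with hsldef
  have hd : 0 < Lth - ml := by linarith
  set Δ : 𝒳 → ℝ := fun x => ℓ x - l x with hΔdef
  set mΔ := ∑ x, P x * Δ x with hmΔdef
  set bb := ∑ x, P x * l x * Δ x with hbbdef
  set cc := ∑ x, P x * Δ x ^ 2 with hccdef
  set Bd := 1 + ∑ x, |Δ x| with hBddef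
  have hBdpos : 0 < Bd := by
    have : 0 ≤ ∑ x, |Δ x| := Finset.sum_nonneg fun x _ => abs_nonneg _
    simp only [hBddef]; linarith
  have hΔabs : ∀ x, |Δ x| ≤ Bd := by
    intro x
    have h1 : |Δ x| ≤ ∑ y, |Δ y| :=
      Finset.single_le_sum (f := fun y => |Δ y|) (fun y _ => abs_nonneg _) (Finset.mem_univ x)
    simp only [hBddef]; linarith
  set t₀ : ℝ := min 1 (min (δ / (1 + |mΔ|)) (1 / Bd)) with ht₀def
  have habs : 0 < 1 + |mΔ| := by positivity
  have ht₀pos : 0 < t₀ := lt_min one_pos (lt_min (by positivity) (by positivity))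
  have ht₀1 : t₀ ≤ 1 := min_le_left _ _
  have ht₀2 : t₀ ≤ δ / (1 + |mΔ|) := le_trans (min_le_right _ _) (min_le_left _ _)
  have ht₀3 : t₀ ≤ 1 / Bd := le_trans (min_le_right _ _) (min_le_right _ _)
  -- the path ℓt
  have key : ∀ t ∈ Set.Ioc (0:ℝ) t₀,
      (ml + t * mΔ) + (sl + 2 * bb * t + cc * t ^ 2) / (2 * (Lth - (ml + t * mΔ)))
      ≥ ml + sl / (2 * (Lth - ml)) := by
    intro t ht
    obtain ⟨ht0, htt⟩ := ht
    have ht1 : t ≤ 1 := le_trans htt ht₀1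
    set ℓt : 𝒳 → ℝ := fun x => l x + t * Δ x with hℓtdef
    have hℓtnn : ∀ x, 0 ≤ ℓt x := by
      intro x
      have : ℓt x = (1 - t) * l x + t * ℓ x := by simp only [hℓtdef, hΔdef]; ring
      rw [this]
      have := hlnn x; have := hn x
      nlinarith
    have hℓtk : ∑ x, (2:ℝ) ^ (-ℓt x) ≤ 1 := by
      calc ∑ x, (2:ℝ) ^ (-ℓt x) ≤ ∑ x, ((1 - t) * (2:ℝ) ^ (-l x) + t * (2:ℝ) ^ (-ℓ x)) := by
            apply Finset.sum_le_sum; intro x _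
            have heq : -ℓt x = -((1 - t) * l x + t * ℓ x) := by simp only [hℓtdef, hΔdef]; ring
            rw [heq]
            exact kraft_convex_pt (l x) (ℓ x) t ht0.le ht1
        _ = (1 - t) * ∑ x, (2:ℝ) ^ (-l x) + t * ∑ x, (2:ℝ) ^ (-ℓ x) := by
            rw [Finset.sum_add_distrib, Finset.mul_sum, Finset.mul_sum]
        _ ≤ (1 - t) * 1 + t * 1 := by
            apply add_le_add
            · apply mul_le_mul_of_nonneg_left hlkraft; linarith
            · apply mul_le_mul_of_nonneg_left hk ht0.le
        _ = 1 := by ring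
    have hℓtM : ∀ x, ℓt x ≤ M x := by
      intro x
      have h1 : t * Δ x ≤ t * |Δ x| := mul_le_mul_of_nonneg_left (le_abs_self _) ht0.le
      have h2 : t * |Δ x| ≤ (1 / Bd) * Bd := by
        apply mul_le_mul (le_trans htt ht₀3) (hΔabs x) (abs_nonneg _) (by positivity)
      have h3 : (1 / Bd) * Bd = 1 := by field_simp
      have := hlM1 x
      simp only [hℓtdef]; linarith
    have hℓtm : ∑ x, P x * ℓt x = ml + t * mΔ := by
      rw [hmldef, hmΔdef, Finset.mul_sum, ← Finset.sum_add_distrib]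
      apply Finset.sum_congr rfl; intro x _; simp only [hℓtdef]; ring
    have hℓts : ∑ x, P x * ℓt x ^ 2 = sl + 2 * bb * t + cc * t ^ 2 := by
      have e : ∀ x : 𝒳, P x * ℓt x ^ 2
          = P x * l x ^ 2 + 2 * (P x * l x * Δ x) * t + P x * Δ x ^ 2 * t ^ 2 := by
        intro x; simp only [hℓtdef]; ring
      rw [Finset.sum_congr rfl (fun x _ => e x), Finset.sum_add_distrib,
        Finset.sum_add_distrib, ← Finset.sum_mul, ← Finset.sum_mul, ← Finset.mul_sum,
        ← hsldef, ← hbbdef, ← hccdef]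
    have hℓtmle : ∑ x, P x * ℓt x ≤ Lth - δ := by
      rw [hℓtm]
      have h1 : t * mΔ ≤ t * |mΔ| := mul_le_mul_of_nonneg_left (le_abs_self _) ht0.le
      have h2 : t * |mΔ| ≤ (δ / (1 + |mΔ|)) * (1 + |mΔ|) := by
        apply mul_le_mul (le_trans htt ht₀2) (by linarith [abs_nonneg mΔ]) (abs_nonneg _)
          (by positivity)
      have h3 : (δ / (1 + |mΔ|)) * (1 + |mΔ|) = δ := by field_simp
      linarith
    have := minK ℓt hℓtnn hℓtk hℓtM hℓtmle
    rw [hℓtm, hℓts] at this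
    exact this
  -- derivative
  set D := mΔ + (2 * bb * (2 * (Lth - ml)) + sl * (2 * mΔ)) / (2 * (Lth - ml)) ^ 2 with hDdef
  have hD : HasDerivAt (fun t => (ml + t * mΔ) +
      (sl + 2 * bb * t + cc * t ^ 2) / (2 * (Lth - (ml + t * mΔ)))) D 0 :=
    phi_hasDeriv ml sl bb cc mΔ Lth hd
  have hD0 : 0 ≤ D := by
    apply slope_nonneg _ D t₀ ht₀pos hD
    intro t ht
    have h := key t ht
    have h0 : (ml + (0:ℝ) * mΔ) + (sl + 2 * bb * 0 + cc * 0 ^ 2) / (2 * (Lth - (ml + 0 * mΔ)))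
        = ml + sl / (2 * (Lth - ml)) := by norm_num
    rw [h0]
    exact h
  -- conclude
  have hsum : ∑ x, ((1 + sl / (2 * (Lth - ml) ^ 2)) * P x + P x * l x / (Lth - ml)) * ℓ x
      - ∑ x, ((1 + sl / (2 * (Lth - ml) ^ 2)) * P x + P x * l x / (Lth - ml)) * l x = D := by
    rw [← Finset.sum_sub_distrib]
    have e1 : ∀ x, ((1 + sl / (2 * (Lth - ml) ^ 2)) * P x + P x * l x / (Lth - ml)) * ℓ x
        - ((1 + sl / (2 * (Lth - ml) ^ 2)) * P x + P x * l x / (Lth - ml)) * l x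
        = (1 + sl / (2 * (Lth - ml) ^ 2)) * (P x * Δ x) + (P x * l x * Δ x) / (Lth - ml) := by
      intro x; simp only [hΔdef]; ring
    rw [Finset.sum_congr rfl (fun x _ => e1 x)]
    rw [Finset.sum_add_distrib, ← Finset.mul_sum, ← Finset.sum_div]
    rw [← hmΔdef, ← hbbdef, hDdef]
    have hd2 : (Lth - ml) ≠ 0 := ne_of_gt hd
    field_simp
    ring
  rw [← sub_nonneg, hsum]
  exact hD0

set_option maxHeartbeats 4000000 in
/-- Minmax–maxmin characterization for minimum average queuing delay (Theorem 6 of the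
paper): under the condition `H(P) + log₂(1 + 1/√2) < L_th`, the infimum over length
functions `ℓ ∈ Λ` with `E[ℓ(X)] < L_th` of `E[ℓ(X)] + E[ℓ(X)²]/(2(L_th − E[ℓ(X)]))`
equals the supremum over `z ≥ 0` and pmfs `Q` of
`Σ_x g_{z,Q,P}(x)·log₂(Σ_{x'} g_{z,Q,P}(x')/g_{z,Q,P}(x)) − (z²/2)·L_th`, where
`g_{z,Q,P}(x) = (1 + z²/2)P(x) + z√(Q(x)P(x))`. -/

theorem stmt_14 {𝒳 : Type*} [Fintype 𝒳] [Nonempty 𝒳]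
    (P : 𝒳 → ℝ) (hP : ∀ x, 0 < P x) (hPsum : ∑ x, P x = 1)
    (Lth : ℝ) (hLth : 0 < Lth)
    (hH : (∑ x, P x * Real.logb 2 (1 / P x)) + Real.logb 2 (1 + 1 / Real.sqrt 2) < Lth) :
    sInf {c : ℝ | ∃ ℓ : 𝒳 → ℝ, (∀ x, 0 ≤ ℓ x) ∧ (∑ x, (2 : ℝ) ^ (-ℓ x) ≤ 1) ∧
        (∑ x, P x * ℓ x < Lth) ∧
        c = (∑ x, P x * ℓ x) + (∑ x, P x * ℓ x ^ 2) / (2 * (Lth - ∑ x, P x * ℓ x))} =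
    sSup {c : ℝ | ∃ z : ℝ, ∃ Q : 𝒳 → ℝ, 0 ≤ z ∧ (∀ x, 0 ≤ Q x) ∧ (∑ x, Q x = 1) ∧
        c = (∑ x, ((1 + z ^ 2 / 2) * P x + z * Real.sqrt (Q x * P x)) *
              Real.logb 2 ((∑ x', ((1 + z ^ 2 / 2) * P x' + z * Real.sqrt (Q x' * P x'))) /
                ((1 + z ^ 2 / 2) * P x + z * Real.sqrt (Q x * P x)))) -
            z ^ 2 / 2 * Lth} := by
  classical
  have hHL : (∑ x, P x * Real.logb 2 (1 / P x)) < Lth := by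
    have h1 : 0 < Real.logb 2 (1 + 1 / Real.sqrt 2) := by
      apply Real.logb_pos (by norm_num)
      have : 0 < 1 / Real.sqrt 2 := by positivity
      linarith
    linarith
  obtain ⟨δ, M, l, hδpos, hlnn, hlkraft, hlM1, hl2δ, minK, minGlob⟩ :=
    exists_min P hP hPsum Lth hLth hHL
  set ml := ∑ x, P x * l x with hmldef
  set sl := ∑ x, P x * l x ^ 2 with hsldef
  have hmlt : ml < Lth := by linarith
  have hd : 0 < Lth - ml := by linarith
  have hml0 : 0 ≤ ml := Finset.sum_nonneg fun x _ => mul_nonneg (hP x).le (hlnn x)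
  have hsl0 : 0 ≤ sl := Finset.sum_nonneg fun x _ => mul_nonneg (hP x).le (sq_nonneg _)
  have hPle1 : ∀ x, P x ≤ 1 := by
    intro x
    calc P x ≤ ∑ y, P y := Finset.single_le_sum (fun y _ => (hP y).le) (Finset.mem_univ x)
      _ = 1 := hPsum
  -- the candidate optimal value
  -- infimum equals astar
  have hAmem : (ml + sl / (2 * (Lth - ml))) ∈ {c : ℝ | ∃ ℓ : 𝒳 → ℝ, (∀ x, 0 ≤ ℓ x) ∧
      (∑ x, (2 : ℝ) ^ (-ℓ x) ≤ 1) ∧ (∑ x, P x * ℓ x < Lth) ∧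
      c = (∑ x, P x * ℓ x) + (∑ x, P x * ℓ x ^ 2) / (2 * (Lth - ∑ x, P x * ℓ x))} :=
    ⟨l, hlnn, hlkraft, hmlt, rfl⟩
  have hAlb : ∀ a ∈ {c : ℝ | ∃ ℓ : 𝒳 → ℝ, (∀ x, 0 ≤ ℓ x) ∧
      (∑ x, (2 : ℝ) ^ (-ℓ x) ≤ 1) ∧ (∑ x, P x * ℓ x < Lth) ∧
      c = (∑ x, P x * ℓ x) + (∑ x, P x * ℓ x ^ 2) / (2 * (Lth - ∑ x, P x * ℓ x))},
      (ml + sl / (2 * (Lth - ml))) ≤ a := by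
    rintro a ⟨ℓ, h1, h2, h3, rfl⟩
    exact minGlob ℓ h1 h2 h3
  have hInf : sInf {c : ℝ | ∃ ℓ : 𝒳 → ℝ, (∀ x, 0 ≤ ℓ x) ∧
      (∑ x, (2 : ℝ) ^ (-ℓ x) ≤ 1) ∧ (∑ x, P x * ℓ x < Lth) ∧
      c = (∑ x, P x * ℓ x) + (∑ x, P x * ℓ x ^ 2) / (2 * (Lth - ∑ x, P x * ℓ x))}
      = ml + sl / (2 * (Lth - ml)) := IsLeast.csInf_eq ⟨hAmem, hAlb⟩
  -- weak duality: every element of B is at most astar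
  have hBub : ∀ b ∈ {c : ℝ | ∃ z : ℝ, ∃ Q : 𝒳 → ℝ, 0 ≤ z ∧ (∀ x, 0 ≤ Q x) ∧ (∑ x, Q x = 1) ∧
      c = (∑ x, ((1 + z ^ 2 / 2) * P x + z * Real.sqrt (Q x * P x)) *
            Real.logb 2 ((∑ x', ((1 + z ^ 2 / 2) * P x' + z * Real.sqrt (Q x' * P x'))) /
              ((1 + z ^ 2 / 2) * P x + z * Real.sqrt (Q x * P x)))) - z ^ 2 / 2 * Lth},
      b ≤ ml + sl / (2 * (Lth - ml)) := by
    rintro b ⟨z, Q, hz, hQ, hQ1, rfl⟩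
    exact weak_dual P hP hPsum Lth z Q l hz hQ hQ1 hlnn hlkraft hmlt
  -- strong duality: an element of B at least astar
  have hBstar : ∃ b ∈ {c : ℝ | ∃ z : ℝ, ∃ Q : 𝒳 → ℝ, 0 ≤ z ∧ (∀ x, 0 ≤ Q x) ∧ (∑ x, Q x = 1) ∧
      c = (∑ x, ((1 + z ^ 2 / 2) * P x + z * Real.sqrt (Q x * P x)) *
            Real.logb 2 ((∑ x', ((1 + z ^ 2 / 2) * P x' + z * Real.sqrt (Q x' * P x'))) /
              ((1 + z ^ 2 / 2) * P x + z * Real.sqrt (Q x * P x)))) - z ^ 2 / 2 * Lth},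
      ml + sl / (2 * (Lth - ml)) ≤ b := by
    rcases eq_or_lt_of_le hsl0 with hsl | hslpos
    · -- degenerate case : l = 0
      have hl0 : ∀ x, l x = 0 := by
        intro x
        have h1 : ∀ y ∈ Finset.univ, (0:ℝ) ≤ P y * l y ^ 2 :=
          fun y _ => mul_nonneg (hP y).le (sq_nonneg _)
        have h2 := (Finset.sum_eq_zero_iff_of_nonneg h1).1 hsl.symm x (Finset.mem_univ x)
        have := hP x
        have h3 : l x ^ 2 = 0 := by
          by_contra hc
          exact hc (by nlinarith)
        exact pow_eq_zero_iff (by norm_num) |>.1 h3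
      have hml : ml = 0 := by
        rw [hmldef]
        apply Finset.sum_eq_zero; intro x _; rw [hl0 x]; ring
      have hslz : sl = 0 := hsl.symm
      refine ⟨_, ⟨0, P, le_refl 0, fun x => (hP x).le, hPsum, rfl⟩, ?_⟩
      have hval : (∑ x, ((1 + (0:ℝ) ^ 2 / 2) * P x + 0 * Real.sqrt (P x * P x)) *
            Real.logb 2 ((∑ x', ((1 + (0:ℝ) ^ 2 / 2) * P x' + 0 * Real.sqrt (P x' * P x'))) /
              ((1 + (0:ℝ) ^ 2 / 2) * P x + 0 * Real.sqrt (P x * P x)))) - (0:ℝ) ^ 2 / 2 * Lth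
          = ∑ x, P x * Real.logb 2 (1 / P x) := by
        norm_num [hPsum]
      rw [hval, hml, hslz]
      have : (0:ℝ) ≤ ∑ x, P x * Real.logb 2 (1 / P x) := by
        apply Finset.sum_nonneg; intro x _
        apply mul_nonneg (hP x).le
        apply Real.logb_nonneg (by norm_num)
        rw [le_div_iff₀ (hP x), one_mul]; exact hPle1 x
      simpa using this
    · -- main case : sl > 0
      have hslne : sl ≠ 0 := ne_of_gt hslpos
      have hsqsl : 0 < Real.sqrt sl := Real.sqrt_pos.2 hslpos
      set zs : ℝ := Real.sqrt sl / (Lth - ml) with hzsdef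
      have hzs : 0 ≤ zs := div_nonneg (Real.sqrt_nonneg _) hd.le
      have hzs2 : zs ^ 2 = sl / (Lth - ml) ^ 2 := by
        rw [hzsdef, div_pow, Real.sq_sqrt hsl0]
      set Qs : 𝒳 → ℝ := fun x => P x * l x ^ 2 / sl with hQsdef
      have hQsnn : ∀ x, 0 ≤ Qs x :=
        fun x => div_nonneg (mul_nonneg (hP x).le (sq_nonneg _)) hsl0
      have hQs1 : ∑ x, Qs x = 1 := by
        rw [hQsdef, ← Finset.sum_div, ← hsldef, div_self hslne]
      set gs : 𝒳 → ℝ := fun x =>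
        (1 + sl / (2 * (Lth - ml) ^ 2)) * P x + P x * l x / (Lth - ml) with hgsdef
      have gmatch : ∀ x, (1 + zs ^ 2 / 2) * P x + zs * Real.sqrt (Qs x * P x) = gs x := by
        intro x
        have h1 : Qs x * P x = (P x * l x) ^ 2 / sl := by rw [hQsdef]; ring
        have h2 : Real.sqrt (Qs x * P x) = P x * l x / Real.sqrt sl := by
          rw [h1, Real.sqrt_div (sq_nonneg _), Real.sqrt_sq (mul_nonneg (hP x).le (hlnn x))]
        have h3 : zs * (P x * l x / Real.sqrt sl) = P x * l x / (Lth - ml) := by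
          rw [hzsdef]
          field_simp
        rw [h2, h3, hzs2, hgsdef]
        have hdne : Lth - ml ≠ 0 := ne_of_gt hd
        field_simp
      have hgspos : ∀ x, 0 < gs x := by
        intro x
        have h1 : 0 < (1 + sl / (2 * (Lth - ml) ^ 2)) * P x := by
          have : 0 ≤ sl / (2 * (Lth - ml) ^ 2) := by positivity
          nlinarith [hP x]
        have h2 : 0 ≤ P x * l x / (Lth - ml) :=
          div_nonneg (mul_nonneg (hP x).le (hlnn x)) hd.le
        simp only [hgsdef]; linarith
      set Sg := ∑ x, gs x with hSgdef
      have hSgpos : 0 < Sg := Finset.sum_pos (fun x _ => hgspos x) Finset.univ_nonempty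
      have hgsle : ∀ x, gs x ≤ Sg := by
        intro x
        rw [hSgdef]
        exact Finset.single_le_sum (fun y _ => (hgspos y).le) (Finset.mem_univ x)
      set ℓ' : 𝒳 → ℝ := fun x => Real.logb 2 (Sg / gs x) with hℓ'def
      have hℓ'nn : ∀ x, 0 ≤ ℓ' x := by
        intro x
        apply Real.logb_nonneg (by norm_num)
        rw [one_le_div (hgspos x)]
        exact hgsle x
      have hℓ'k : ∑ x, (2:ℝ) ^ (-ℓ' x) ≤ 1 := by
        have heach : ∀ x, (2:ℝ) ^ (-ℓ' x) = gs x / Sg := by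
          intro x
          have h1 : -ℓ' x = Real.logb 2 (gs x / Sg) := by
            simp only [hℓ'def]
            rw [← Real.logb_inv, inv_div]
          rw [h1, Real.rpow_logb (by norm_num) (by norm_num) (div_pos (hgspos x) hSgpos)]
        rw [Finset.sum_congr rfl (fun x _ => heach x), ← Finset.sum_div, ← hSgdef,
          div_self (ne_of_gt hSgpos)]
      -- first order condition applied to ℓ'
      have hfo := first_order P hP Lth δ M l hδpos hLth hlnn hlkraft hlM1 hl2δ minK
        ℓ' hℓ'nn hℓ'k
      rw [← hmldef, ← hsldef] at hfo
      have hfo' : ∑ x, gs x * l x ≤ ∑ x, gs x * ℓ' x := hfo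
      -- value identity
      have hgl : ∑ x, gs x * l x = (1 + sl / (2 * (Lth - ml) ^ 2)) * ml + sl / (Lth - ml) := by
        have e : ∀ x, gs x * l x = (1 + sl / (2 * (Lth - ml) ^ 2)) * (P x * l x)
            + (P x * l x ^ 2) / (Lth - ml) := by
          intro x; simp only [hgsdef]; ring
        rw [Finset.sum_congr rfl (fun x _ => e x), Finset.sum_add_distrib, ← Finset.mul_sum,
          ← Finset.sum_div, ← hmldef, ← hsldef]
      have hident : ∑ x, gs x * l x - zs ^ 2 / 2 * Lth = ml + sl / (2 * (Lth - ml)) := by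
        rw [hgl, hzs2]
        field_simp
        ring
      refine ⟨(∑ x, gs x * Real.logb 2 (Sg / gs x)) - zs ^ 2 / 2 * Lth,
        ⟨zs, Qs, hzs, hQsnn, hQs1, ?_⟩, ?_⟩
      · simp only [gmatch]; rfl
      · have : ∑ x, gs x * ℓ' x = ∑ x, gs x * Real.logb 2 (Sg / gs x) := rfl
        linarith [hfo', hident]
  -- conclude
  obtain ⟨bstar, hBmem, hble⟩ := hBstar
  have hSup : sSup {c : ℝ | ∃ z : ℝ, ∃ Q : 𝒳 → ℝ, 0 ≤ z ∧ (∀ x, 0 ≤ Q x) ∧ (∑ x, Q x = 1) ∧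
      c = (∑ x, ((1 + z ^ 2 / 2) * P x + z * Real.sqrt (Q x * P x)) *
            Real.logb 2 ((∑ x', ((1 + z ^ 2 / 2) * P x' + z * Real.sqrt (Q x' * P x'))) /
              ((1 + z ^ 2 / 2) * P x + z * Real.sqrt (Q x * P x)))) - z ^ 2 / 2 * Lth}
      = ml + sl / (2 * (Lth - ml)) := by
    apply le_antisymm
    · exact csSup_le ⟨bstar, hBmem⟩ hBub
    · calc ml + sl / (2 * (Lth - ml)) ≤ bstar := hble
        _ ≤ _ := le_csSup ⟨ml + sl / (2 * (Lth - ml)), hBub⟩ hBmem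
  rw [hInf, hSup]
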